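/- The Jacobi triple product identity: for complex q, z with 0 < |q| < 1 and z ≠ 0, ∑_{n=-∞}^{∞} q^{n^2} z^n = (q^2; q^2)_∞ (-zq; q^2)_∞ (-q/z; q^2)_∞. -/

import Mathlib

/-- Finite q-Pochhammer symbol: (a;q)_n = ∏_{k=0}^{n-1} (1 - a q^k). -/
noncomputable def qp (a q : ℂ) (n : ℕ) : ℂ := ∏ k ∈ Finset.range n, (1 - a * q ^ k)

/-- Infinite q-Pochhammer symbol: (a;q)_∞ = ∏_{k=0}^∞ (1 - a q^k). -/
noncomputable def qpInf (a q : ℂ) : ℂ := ∏' k : ℕ, (1 - a * q ^ k)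

open Finset Filter Topology

/-- Gaussian binomial coefficient (as a complex number), defined by Pascal recurrence. -/
noncomputable def gb (Q : ℂ) : ℕ → ℕ → ℂ
  | 0, 0 => 1
  | 0, _+1 => 0
  | m+1, 0 => gb Q m 0
  | m+1, k+1 => gb Q m (k+1) + Q^(m-k) * gb Q m k

lemma gb_zero (Q : ℂ) (m : ℕ) : gb Q m 0 = 1 := by
  induction m with
  | zero => rfl
  | succ m ih => rw [gb, ih]

lemma gb_of_lt (Q : ℂ) : ∀ {m k : ℕ}, m < k → gb Q m k = 0 := by
  intro m
  induction m with
  | zero => intro k hk; match k, hk with | (j+1), _ => rfl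
  | succ m ih =>
    intro k hk
    match k, hk with
    | (j+1), hk =>
      have h1 : m < j + 1 := by omega
      have h2 : m < j := by omega
      rw [gb, ih h1, ih h2, mul_zero, add_zero]

lemma gb_diag (Q : ℂ) (m : ℕ) : gb Q m m = 1 := by
  induction m with
  | zero => rfl
  | succ m ih =>
    rw [gb, ih, gb_of_lt Q (Nat.lt_succ_self m), Nat.sub_self, pow_zero, one_mul, zero_add]

lemma qp_succ (a q : ℂ) (n : ℕ) : qp a q (n+1) = qp a q n * (1 - a * q ^ n) :=
  Finset.prod_range_succ _ n

lemma gb_mul_qp (Q : ℂ) : ∀ m k : ℕ, k ≤ m →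
    gb Q m k * (qp Q Q k * qp Q Q (m - k)) = qp Q Q m := by
  intro m
  induction m with
  | zero => intro k hk; interval_cases k; simp [gb, qp]
  | succ m ih =>
    intro k hk
    match k with
    | 0 => simp [gb_zero, qp]
    | (j+1) =>
      rcases Nat.lt_or_ge j m with hj | hj
      · -- 1 ≤ j+1 ≤ m
        have hsub : m + 1 - (j+1) = (m - (j+1)) + 1 := by omega
        have hsub2 : m - (j+1) = m - j - 1 := by omega
        have e1 : gb Q m (j+1) * (qp Q Q (j+1) * qp Q Q (m - (j+1))) = qp Q Q m := ih (j+1) hj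
        have e2 : gb Q m j * (qp Q Q j * qp Q Q (m - j)) = qp Q Q m := ih j (le_of_lt hj)
        have hmj : m - j = (m - (j+1)) + 1 := by omega
        rw [gb, qp_succ Q Q m, hsub]
        rw [qp_succ Q Q (m - (j+1))]
        have hqpj : qp Q Q (j+1) = qp Q Q j * (1 - Q * Q ^ j) := qp_succ Q Q j
        have hexp : m - (j+1) = m - j - 1 := by omega
        -- goal: (gb m (j+1) + Q^(m-j) * gb m j) * (qp (j+1) * (qp (m-(j+1)) * (1 - Q*Q^(m-(j+1))))) = qp m * (1 - Q*Q^m)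
        have hyp : m - (j+1) + (j+1) = m := by omega
        have hyp2 : m - j + j = m := by omega
        have key2 : (Q^(m-j) : ℂ) * (Q * Q^j) = Q * Q^m := by
          calc (Q^(m-j) : ℂ) * (Q * Q^j) = Q * (Q^(m-j) * Q^j) := by ring
            _ = Q * Q^m := by rw [← pow_add, hyp2]
        calc (gb Q m (j+1) + Q^(m-j) * gb Q m j) *
              (qp Q Q (j+1) * (qp Q Q (m-(j+1)) * (1 - Q * Q ^ (m-(j+1)))))
            = (gb Q m (j+1) * (qp Q Q (j+1) * qp Q Q (m - (j+1)))) * (1 - Q * Q ^ (m-(j+1)))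
              + (Q^(m-j) * (gb Q m j * (qp Q Q j * (qp Q Q (m-(j+1)) * (1 - Q*Q^(m-(j+1))))))) * (1 - Q * Q^j) := by
              rw [hqpj]; ring
          _ = qp Q Q m * (1 - Q * Q ^ (m-(j+1))) + (Q^(m-j) * qp Q Q m) * (1 - Q * Q^j) := by
              have e2' : gb Q m j * (qp Q Q j * (qp Q Q (m-(j+1)) * (1 - Q*Q^(m-(j+1))))) = qp Q Q m := by
                rw [← qp_succ, ← hmj]; exact e2
              rw [e1, e2']
          _ = qp Q Q m * (1 - Q * Q ^ m) := by
              have expand : qp Q Q m * (1 - Q * Q ^ (m-(j+1))) + (Q^(m-j) * qp Q Q m) * (1 - Q * Q^j)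
                  = qp Q Q m * (1 - Q * Q ^ (m-(j+1)) + Q^(m-j) - Q^(m-j) * (Q * Q^j)) := by ring
              rw [expand, key2]
              have h3 : Q * Q ^ (m - (j+1)) = Q ^ (m - j) := by
                have : m - j = (m - (j+1)) + 1 := by omega
                rw [this, pow_succ']
              rw [h3]
              ring
      · -- j ≥ m, so j + 1 = m + 1, i.e. j = m
        have : j = m := by omega
        subst this
        rw [gb_diag, Nat.sub_self, one_mul]
        simp [qp]

/-- The q-binomial theorem (finite product form). -/
lemma qbinom (Q x : ℂ) (m : ℕ) :
    ∏ j ∈ range m, (1 + x * Q ^ j) =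
      ∑ k ∈ range (m+1), Q ^ (k.choose 2) * gb Q m k * x ^ k := by
  induction m with
  | zero => simp [gb]
  | succ m ih =>
    rw [prod_range_succ, ih]
    have lhs_expand : (∑ k ∈ range (m+1), Q ^ (k.choose 2) * gb Q m k * x ^ k) * (1 + x * Q ^ m)
        = (∑ k ∈ range (m+1), Q ^ (k.choose 2) * gb Q m k * x ^ k)
          + (∑ k ∈ range (m+1), Q ^ (k.choose 2) * Q ^ m * gb Q m k * x ^ (k+1)) := by
      rw [mul_add, mul_one, Finset.sum_mul]
      congr 1
      apply Finset.sum_congr rfl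
      intro k _
      ring
    rw [lhs_expand]
    -- RHS: sum over range (m+2)
    rw [Finset.sum_range_succ' (fun k => Q ^ (k.choose 2) * gb Q (m+1) k * x ^ k) (m+1)]
    -- now RHS = ∑_{j ∈ range (m+1)} f (j+1) + f 0
    have f0 : Q ^ ((0:ℕ).choose 2) * gb Q (m+1) 0 * x ^ 0 = 1 := by
      simp [gb_zero]
    rw [f0]
    have step : ∀ j ∈ range (m+1),
        Q ^ ((j+1).choose 2) * gb Q (m+1) (j+1) * x ^ (j+1)
          = Q ^ ((j+1).choose 2) * gb Q m (j+1) * x ^ (j+1)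
            + Q ^ (j.choose 2) * Q ^ m * gb Q m j * x ^ (j+1) := by
      intro j hj
      have hjm : j ≤ m := by simpa [Nat.lt_succ_iff] using hj
      rw [show gb Q (m+1) (j+1) = gb Q m (j+1) + Q^(m-j) * gb Q m j from rfl]
      have hch : (j+1).choose 2 = j.choose 2 + j := by
        rw [Nat.choose_succ_succ]
        simp [Nat.choose_one_right, Nat.add_comm]
      have : (Q : ℂ) ^ ((j+1).choose 2) * Q ^ (m-j) = Q ^ (j.choose 2) * Q ^ m := by
        have hexp : (j+1).choose 2 + (m-j) = j.choose 2 + m := by rw [hch]; omega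
        rw [← pow_add, ← pow_add, hexp]
      calc Q ^ ((j+1).choose 2) * (gb Q m (j+1) + Q^(m-j) * gb Q m j) * x ^ (j+1)
          = Q ^ ((j+1).choose 2) * gb Q m (j+1) * x ^ (j+1)
            + (Q ^ ((j+1).choose 2) * Q ^ (m-j)) * gb Q m j * x ^ (j+1) := by ring
        _ = _ := by rw [this]
    rw [Finset.sum_congr rfl step, Finset.sum_add_distrib]
    have A : (∑ j ∈ range (m+1), Q ^ ((j+1).choose 2) * gb Q m (j+1) * x ^ (j+1)) + 1
        = ∑ k ∈ range (m+1), Q ^ (k.choose 2) * gb Q m k * x ^ k := by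
      have h := Finset.sum_range_succ' (fun k => Q ^ (k.choose 2) * gb Q m k * x ^ k) (m+1)
      rw [Finset.sum_range_succ] at h
      rw [gb_of_lt Q (Nat.lt_succ_self m)] at h
      simpa [gb_zero] using h.symm
    linear_combination -A

lemma prod_zpow_eq (q : ℂ) (hq : q ≠ 0) (N : ℕ) (e : ℕ → ℤ) :
    ∏ j ∈ range N, q ^ (e j) = q ^ (∑ j ∈ range N, e j) := by
  induction N with
  | zero => simp
  | succ N ih => rw [prod_range_succ, sum_range_succ, ih, zpow_add₀ hq]

lemma gauss_sum (M : ℕ) : (∑ j ∈ range M, (2*(j:ℤ)+1)) = (M:ℤ)^2 := by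
  induction M with
  | zero => simp
  | succ M ih => rw [sum_range_succ, ih]; push_cast; ring

lemma two_choose_two (k : ℕ) : 2 * ((k.choose 2 : ℤ)) = (k:ℤ) * ((k:ℤ) - 1) := by
  induction k with
  | zero => simp
  | succ k ih =>
    rw [Nat.choose_succ_succ, Nat.choose_one_right]
    push_cast
    push_cast at ih
    linarith [ih]

/-- The finite Jacobi triple product identity. -/
lemma finJac (q z : ℂ) (hq : q ≠ 0) (hz : z ≠ 0) (N : ℕ) :
    qp (-(z*q)) (q^2) N * qp (-(q/z)) (q^2) N =
      ∑ n ∈ Finset.Icc (-(N:ℤ)) (N:ℤ),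
        gb (q^2) (2*N) (n + N).toNat * (q ^ (n^2) * z ^ n) := by
  set Q : ℂ := q^2 with hQ
  have hQ0 : Q ≠ 0 := pow_ne_zero 2 hq
  set x : ℂ := z * q ^ ((1:ℤ) - 2*N) with hx
  -- Step 1: split the product of 2N factors
  have hsplit : ∏ j ∈ range (2*N), (1 + x * Q ^ j)
      = (z ^ (N:ℤ) * q ^ (-((N:ℤ)^2))) * (qp (-(z*q)) Q N * qp (-(q/z)) Q N) := by
    rw [two_mul, Finset.prod_range_add]
    have h2 : ∀ i ∈ range N, (1 + x * Q ^ (N + i)) = 1 - (-(z*q)) * Q ^ i := by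
      intro i _
      have : x * Q ^ (N + i) = z * q * Q ^ i := by
        rw [hx, hQ, ← pow_mul]
        rw [show ((q : ℂ) ^ (2 * (N + i))) = q ^ ((2 * (N + i) : ℕ) : ℤ) from (zpow_natCast q _).symm]
        rw [mul_assoc, ← zpow_add₀ hq]
        rw [show (1 - 2*(N:ℤ) + (2 * (N + i) : ℕ)) = (2*i+1 : ℤ) by push_cast; ring]
        rw [show ((2:ℤ)*i+1) = ((2*i+1 : ℕ) : ℤ) by push_cast; ring, zpow_natCast]
        rw [pow_succ, pow_mul]
        ring
      rw [this]; ring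
    have h1 : ∀ j ∈ range N, (1 + x * Q ^ j)
        = (z * q ^ (2*(j:ℤ)+1-2*N)) * (1 - (-(q/z)) * Q ^ (N - 1 - j)) := by
      intro j hj
      have hjN : j < N := mem_range.mp hj
      have hxQ : x * Q ^ j = z * q ^ (2*(j:ℤ)+1-2*N) := by
        rw [hx, hQ, ← pow_mul]
        rw [show ((q : ℂ) ^ (2 * j)) = q ^ ((2 * j : ℕ) : ℤ) from (zpow_natCast q _).symm]
        rw [mul_assoc, ← zpow_add₀ hq]
        congr 2
        push_cast; ring
      have hQpow : (Q : ℂ) ^ (N - 1 - j) = q ^ ((2*(N-1-j) : ℕ) : ℤ) := by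
        rw [hQ, ← pow_mul, zpow_natCast]
      rw [hxQ, hQpow]
      have hexp : z * q ^ (2*(j:ℤ)+1-2*N) * ((q/z) * q ^ ((2*(N-1-j) : ℕ) : ℤ)) = 1 := by
        rw [div_eq_mul_inv]
        have : z * q ^ (2*(j:ℤ)+1-2*N) * (q * z⁻¹ * q ^ ((2*(N-1-j) : ℕ) : ℤ))
            = (z * z⁻¹) * (q ^ (2*(j:ℤ)+1-2*N) * q ^ (1:ℤ) * q ^ ((2*(N-1-j) : ℕ) : ℤ)) := by
          rw [zpow_one]; ring
        rw [this, mul_inv_cancel₀ hz, one_mul, ← zpow_add₀ hq, ← zpow_add₀ hq]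
        rw [show (2*(j:ℤ)+1-2*N + 1 + (2*(N-1-j) : ℕ)) = (0:ℤ) by push_cast [Nat.sub_sub]; omega]
        exact zpow_zero q
      linear_combination -hexp
    rw [Finset.prod_congr rfl h1, Finset.prod_congr rfl h2, Finset.prod_mul_distrib,
      Finset.prod_mul_distrib, Finset.prod_const, card_range, prod_zpow_eq q hq N _,
      Finset.prod_range_reflect (fun i => 1 - (-(q/z)) * Q ^ i) N]
    have hsum : (∑ j ∈ range N, (2*(j:ℤ)+1-2*N)) = -((N:ℤ)^2) := by
      have : ∀ j ∈ range N, (2*(j:ℤ)+1-2*N) = (2*(j:ℤ)+1) - 2*N := fun j _ => by ring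
      rw [Finset.sum_congr rfl this, Finset.sum_sub_distrib, gauss_sum, Finset.sum_const,
        card_range]
      push_cast; ring
    rw [hsum, qp, qp, ← zpow_natCast z N]
    ring
  have hw : (z ^ (N:ℤ) * q ^ (-((N:ℤ)^2))) ≠ 0 :=
    mul_ne_zero (zpow_ne_zero _ hz) (zpow_ne_zero _ hq)
  apply mul_left_cancel₀ hw
  rw [← hsplit, qbinom Q x (2*N), Finset.mul_sum]
  refine Finset.sum_nbij' (fun k => (k:ℤ) - N) (fun n => (n + N).toNat) ?_ ?_ ?_ ?_ ?_
  · intro k hk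
    simp only [mem_range] at hk
    simp only [Finset.mem_Icc]
    omega
  · intro n hn
    simp only [Finset.mem_Icc] at hn
    simp only [mem_range]
    omega
  · intro k hk
    simp only [mem_range] at hk
    show ((k:ℤ) - N + N).toNat = k
    omega
  · intro n hn
    simp only [Finset.mem_Icc] at hn
    show (((n + (N:ℤ)).toNat : ℤ) - N) = n
    omega
  · intro k hk
    simp only [mem_range] at hk
    have htn : ((k:ℤ) - N + N).toNat = k := by omega
    rw [htn]
    have e1 : (Q:ℂ)^(k.choose 2) = q ^ ((2*(k.choose 2) : ℕ) : ℤ) := by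
      rw [hQ, ← pow_mul, zpow_natCast]
    have e2 : x ^ k = z ^ (k:ℤ) * q ^ ((1 - 2*(N:ℤ))*k) := by
      rw [hx, mul_pow, ← zpow_natCast z k, ← zpow_natCast (q ^ ((1:ℤ) - 2*N)) k, ← zpow_mul]
    have eq : q ^ ((2*(k.choose 2) : ℕ) : ℤ) * q ^ ((1 - 2*(N:ℤ))*k)
        = q ^ (-((N:ℤ)^2)) * q ^ (((k:ℤ)-N)^2) := by
      rw [← zpow_add₀ hq, ← zpow_add₀ hq]
      congr 1
      have h2c := two_choose_two k
      push_cast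
      push_cast at h2c
      linear_combination h2c
    have ez : z ^ (N:ℤ) * z ^ ((k:ℤ) - N) = z ^ (k:ℤ) := by
      rw [← zpow_add₀ hz]
      congr 1
      ring
    calc Q ^ k.choose 2 * gb Q (2 * N) k * x ^ k
        = gb Q (2*N) k * (z ^ (k:ℤ) * (q ^ ((2*(k.choose 2) : ℕ) : ℤ) * q ^ ((1 - 2*(N:ℤ))*k))) := by
          rw [e1, e2]; ring
      _ = gb Q (2*N) k * ((z ^ (N:ℤ) * z ^ ((k:ℤ) - N)) * (q ^ (-((N:ℤ)^2)) * q ^ (((k:ℤ)-N)^2))) := by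
          rw [eq, ez]
      _ = z ^ (N:ℤ) * q ^ (-(N:ℤ)^2) * (gb Q (2*N) k * (q ^ (((k:ℤ)-N)^2) * z ^ ((k:ℤ)-N))) := by
          ring

open Complex in
lemma multipliable_aux (a Q : ℂ) (hQ : ‖Q‖ < 1) :
    Multipliable (fun k : ℕ => 1 - a * Q ^ k) := by
  by_cases h0 : ∃ k, 1 - a * Q ^ k = 0
  · obtain ⟨k₀, hk₀⟩ := h0
    refine ⟨0, ?_⟩
    rw [HasProd]
    refine tendsto_const_nhds.congr' ?_
    filter_upwards [Filter.eventually_ge_atTop ({k₀} : Finset ℕ)] with s hs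
    exact (Finset.prod_eq_zero (hs (Finset.mem_singleton_self k₀)) hk₀).symm
  · push_neg at h0
    have habs : Tendsto (fun n : ℕ => ‖a‖ * ‖Q‖ ^ n) atTop (𝓝 0) := by
      simpa using (tendsto_pow_atTop_nhds_zero_of_lt_one (norm_nonneg Q) hQ).const_mul
        (‖a‖)
    have hev : ∀ᶠ n : ℕ in atTop, ‖a‖ * ‖Q‖ ^ n ≤ 1/2 :=
      habs.eventually (eventually_le_nhds (by norm_num))
    obtain ⟨m₀, hm₀⟩ := Filter.eventually_atTop.mp hev
    have hs : Summable (fun n : ℕ => Complex.log (1 - a * Q ^ (n + m₀))) := by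
      refine Summable.of_norm_bounded
        (g := fun n => 3/2 * (‖a‖ * ‖Q‖ ^ m₀) * ‖Q‖ ^ n) ?_ ?_
      · exact (summable_geometric_of_lt_one (norm_nonneg Q) hQ).mul_left _
      · intro n
        have hnorm : ‖-(a * Q ^ (n + m₀))‖ = ‖a‖ * ‖Q‖ ^ (n + m₀) := by
          rw [norm_neg, norm_mul, norm_pow]
        have h1 : ‖-(a * Q ^ (n + m₀))‖ ≤ 1/2 := by
          rw [hnorm]; exact hm₀ (n + m₀) (Nat.le_add_left _ _)
        calc ‖Complex.log (1 - a * Q ^ (n + m₀))‖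
            = ‖Complex.log (1 + -(a * Q ^ (n + m₀)))‖ := by rw [sub_eq_add_neg]
          _ ≤ 3/2 * ‖-(a * Q ^ (n + m₀))‖ := Complex.norm_log_one_add_half_le_self h1
          _ = 3/2 * (‖a‖ * ‖Q‖ ^ m₀) * ‖Q‖ ^ n := by
              rw [hnorm, pow_add]; ring
    have hsum : Summable (fun n : ℕ => Complex.log (1 - a * Q ^ n)) :=
      (summable_nat_add_iff m₀).mp hs
    exact Complex.multipliable_of_summable_log hsum

lemma tendsto_qp (a Q : ℂ) (hQ : ‖Q‖ < 1) :
    Tendsto (fun N => qp a Q N) atTop (𝓝 (qpInf a Q)) :=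
  (multipliable_aux a Q hQ).hasProd.tendsto_prod_nat

lemma weier (s : Finset ℕ) (x : ℕ → ℝ) (h0 : ∀ i, 0 ≤ x i) (h1 : ∀ i, x i ≤ 1) :
    1 - ∑ i ∈ s, x i ≤ ∏ i ∈ s, (1 - x i) := by
  induction s using Finset.induction_on with
  | empty => simp
  | insert a s ha ih =>
    rw [Finset.prod_insert ha, Finset.sum_insert ha]
    have hP : 0 ≤ ∏ i ∈ s, (1 - x i) := Finset.prod_nonneg fun i _ => by linarith [h1 i]
    have hS : 0 ≤ ∑ i ∈ s, x i := Finset.sum_nonneg fun i _ => h0 i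
    nlinarith [h0 a, h1 a]

lemma qp_lower_real (r : ℝ) (h0 : 0 ≤ r) (h1 : r < 1) :
    ∃ δ : ℝ, 0 < δ ∧ ∀ m : ℕ, δ ≤ ∏ j ∈ range m, (1 - r ^ (j+1)) := by
  have hgeo : Summable (fun j : ℕ => r ^ (j+1)) := by
    simpa [pow_succ'] using (summable_geometric_of_lt_one h0 h1).mul_left r
  have htail : Tendsto (fun i => ∑' k : ℕ, r ^ (k + i + 1)) atTop (𝓝 0) := by
    have := tendsto_sum_nat_add (fun j : ℕ => r ^ (j+1))
    simpa using this
  obtain ⟨m₀, hm₀⟩ := Filter.eventually_atTop.mp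
    (htail.eventually (eventually_le_nhds (by norm_num : (0:ℝ) < 1/2)))
  have hm₀' : (∑' k : ℕ, r ^ (k + m₀ + 1)) ≤ 1/2 := hm₀ m₀ le_rfl
  have hfac : ∀ j : ℕ, 0 < 1 - r ^ (j+1) := by
    intro j
    have : r ^ (j+1) < 1 := pow_lt_one₀ h0 h1 (Nat.succ_ne_zero j)
    linarith
  have hfac1 : ∀ j : ℕ, 1 - r ^ (j+1) ≤ 1 := by
    intro j; have : 0 ≤ r ^ (j+1) := pow_nonneg h0 _; linarith
  set P : ℝ := ∏ j ∈ range m₀, (1 - r ^ (j+1)) with hP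
  have hPpos : 0 < P := Finset.prod_pos fun j _ => hfac j
  refine ⟨P * (1/2), by positivity, fun m => ?_⟩
  rcases le_or_gt m m₀ with h | h
  · have hsplit : (∏ j ∈ range m, (1 - r ^ (j+1))) * ∏ j ∈ Finset.Ico m m₀, (1 - r ^ (j+1)) = P :=
      Finset.prod_range_mul_prod_Ico _ h
    have hIco1 : ∏ j ∈ Finset.Ico m m₀, (1 - r ^ (j+1)) ≤ 1 :=
      Finset.prod_le_one (fun j _ => le_of_lt (hfac j)) (fun j _ => hfac1 j)
    have hIco0 : 0 < ∏ j ∈ Finset.Ico m m₀, (1 - r ^ (j+1)) :=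
      Finset.prod_pos fun j _ => hfac j
    have hRm : 0 < ∏ j ∈ range m, (1 - r ^ (j+1)) := Finset.prod_pos fun j _ => hfac j
    nlinarith
  · have hsplit : P * ∏ j ∈ Finset.Ico m₀ m, (1 - r ^ (j+1))
        = ∏ j ∈ range m, (1 - r ^ (j+1)) :=
      Finset.prod_range_mul_prod_Ico _ (le_of_lt h)
    have hsum_le : ∑ j ∈ Finset.Ico m₀ m, r ^ (j+1) ≤ 1/2 := by
      rw [Finset.sum_Ico_eq_sum_range]
      calc ∑ j ∈ range (m - m₀), r ^ (m₀ + j + 1)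
          = ∑ j ∈ range (m - m₀), r ^ (j + m₀ + 1) := by
            apply Finset.sum_congr rfl; intro j _; congr 1; omega
        _ ≤ ∑' k : ℕ, r ^ (k + m₀ + 1) := by
            apply Summable.sum_le_tsum
            · intro k _; positivity
            · have : Summable (fun k : ℕ => r ^ (k + (m₀ + 1))) :=
                (summable_nat_add_iff (m₀ + 1)).mpr (summable_geometric_of_lt_one h0 h1)
              apply this.congr; intro k; ring_nf
        _ ≤ 1/2 := hm₀'
    have hW : 1 - ∑ j ∈ Finset.Ico m₀ m, r ^ (j+1)
        ≤ ∏ j ∈ Finset.Ico m₀ m, (1 - r ^ (j+1)) := by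
      apply weier
      · intro i; positivity
      · intro i
        have : 0 < 1 - r ^ (i+1) := hfac i
        linarith
    have h12 : (1:ℝ)/2 ≤ ∏ j ∈ Finset.Ico m₀ m, (1 - r ^ (j+1)) := by linarith
    calc P * (1/2) ≤ P * ∏ j ∈ Finset.Ico m₀ m, (1 - r ^ (j+1)) := by
          apply mul_le_mul_of_nonneg_left h12 (le_of_lt hPpos)
      _ = _ := hsplit

lemma qp_abs_lower (Q : ℂ) (hQ : ‖Q‖ < 1) :
    ∃ δ : ℝ, 0 < δ ∧ ∀ m : ℕ, δ ≤ ‖qp Q Q m‖ := by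
  obtain ⟨δ, hδ0, hδ⟩ := qp_lower_real (‖Q‖) (norm_nonneg Q) hQ
  refine ⟨δ, hδ0, fun m => ?_⟩
  refine le_trans (hδ m) ?_
  rw [qp, norm_prod]
  apply Finset.prod_le_prod
  · intro j _
    have : ‖Q‖ ^ (j+1) < 1 := pow_lt_one₀ (norm_nonneg Q) hQ (Nat.succ_ne_zero j)
    linarith
  · intro j _
    have h1 : ‖Q * Q ^ j‖ = ‖Q‖ ^ (j+1) := by
      rw [norm_mul, norm_pow, pow_succ']
    calc 1 - ‖Q‖ ^ (j+1) = ‖1‖ - ‖Q * Q ^ j‖ := by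
          rw [norm_one, h1]
      _ ≤ ‖1 - Q * Q ^ j‖ := norm_sub_norm_le _ _

lemma qp_abs_upper (a Q : ℂ) (hQ : ‖Q‖ < 1) :
    ∀ m : ℕ, ‖qp a Q m‖ ≤ Real.exp (∑' j : ℕ, ‖a‖ * ‖Q‖ ^ j) := by
  intro m
  have hsum : Summable (fun j : ℕ => ‖a‖ * ‖Q‖ ^ j) :=
    (summable_geometric_of_lt_one (norm_nonneg Q) hQ).mul_left _
  rw [qp, norm_prod]
  calc ∏ j ∈ range m, ‖1 - a * Q ^ j‖
      ≤ ∏ j ∈ range m, Real.exp (‖a‖ * ‖Q‖ ^ j) := by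
        apply Finset.prod_le_prod
        · intro j _; exact norm_nonneg _
        · intro j _
          calc ‖1 - a * Q ^ j‖ ≤ ‖(1:ℂ)‖ + ‖a * Q ^ j‖ := by
                simpa using norm_sub_le (1 : ℂ) (a * Q ^ j)
            _ = ‖a‖ * ‖Q‖ ^ j + 1 := by
                rw [norm_one, norm_mul, norm_pow]; ring
            _ ≤ Real.exp (‖a‖ * ‖Q‖ ^ j) := Real.add_one_le_exp _
    _ = Real.exp (∑ j ∈ range m, ‖a‖ * ‖Q‖ ^ j) := (Real.exp_sum _ _).symm
    _ ≤ Real.exp (∑' j : ℕ, ‖a‖ * ‖Q‖ ^ j) := by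
        apply Real.exp_le_exp.mpr
        apply Summable.sum_le_tsum
        · intro j _; positivity
        · exact hsum

lemma summable_theta_nat (q w : ℂ) (hq0 : q ≠ 0) (hq : ‖q‖ < 1) (hw : w ≠ 0) :
    Summable (fun n : ℕ => ‖q ^ ((n:ℤ)^2) * w ^ (n:ℤ)‖) := by
  set g : ℕ → ℝ := fun n => ‖q ^ ((n:ℤ)^2) * w ^ (n:ℤ)‖ with hg
  have hgnn : ∀ n, 0 ≤ g n := fun n => norm_nonneg _
  have key : ∀ n : ℕ, g (n+1) = (‖q‖ ^ (2*n+1) * ‖w‖) * g n := by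
    intro n
    have e1 : (q : ℂ) ^ (((n:ℕ)+1:ℤ)^2) = q ^ ((n:ℤ)^2) * q ^ (((2*n+1 : ℕ) : ℤ)) := by
      rw [← zpow_add₀ hq0]
      congr 1
      push_cast; ring
    have e2 : (w : ℂ) ^ (((n:ℕ)+1:ℤ)) = w ^ ((n:ℤ)) * w := by
      rw [zpow_add_one₀ hw]
    have : g (n+1) = ‖q ^ ((n:ℤ)^2) * q ^ (((2*n+1:ℕ)):ℤ) * (w ^ (n:ℤ) * w)‖ := by
      rw [hg]
      push_cast
      push_cast at e1 e2
      rw [← e1, ← e2]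
    rw [this, zpow_natCast]
    simp only [hg, norm_mul, norm_pow]
    ring
  have hlim : Tendsto (fun n : ℕ => ‖q‖ ^ (2*n+1) * ‖w‖) atTop (𝓝 0) := by
    have h1 : Tendsto (fun n : ℕ => (‖q‖ ^ 2) ^ n) atTop (𝓝 0) :=
      tendsto_pow_atTop_nhds_zero_of_lt_one (by positivity)
        (pow_lt_one₀ (norm_nonneg q) hq (by norm_num))
    have := (h1.const_mul (‖q‖ * ‖w‖))
    rw [mul_zero] at this
    apply this.congr
    intro n
    rw [← pow_mul, pow_add, pow_mul, pow_one]
    ring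
  have hev : ∀ᶠ n : ℕ in atTop, ‖q‖ ^ (2*n+1) * ‖w‖ ≤ 1/2 :=
    hlim.eventually (eventually_le_nhds (by norm_num))
  apply summable_of_ratio_norm_eventually_le (r := 1/2) (by norm_num)
  filter_upwards [hev] with n hn
  rw [Real.norm_of_nonneg (hgnn (n+1)), Real.norm_of_nonneg (hgnn n), key n]
  have := mul_le_mul_of_nonneg_right hn (hgnn n)
  linarith

lemma summable_theta_abs (q z : ℂ) (hq0 : q ≠ 0) (hq : ‖q‖ < 1) (hz : z ≠ 0) :
    Summable (fun n : ℤ => ‖q ^ (n^2) * z ^ n‖) := by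
  apply Summable.of_nat_of_neg
  · exact summable_theta_nat q z hq0 hq hz
  · have h := summable_theta_nat q z⁻¹ hq0 hq (inv_ne_zero hz)
    apply h.congr
    intro n
    congr 2
    · congr 1; ring
    · rw [inv_zpow, ← zpow_neg]


/-- The Jacobi triple product identity. -/
theorem jacobi_triple_product (q z : ℂ) (hq0 : 0 < ‖q‖) (hq : ‖q‖ < 1)
    (hz : z ≠ 0) :
    HasSum (fun n : ℤ => q ^ (n ^ 2) * z ^ n)
      (qpInf (q ^ 2) (q ^ 2) * qpInf (-(z * q)) (q ^ 2) * qpInf (-(q / z)) (q ^ 2)) := by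
  have hq0' : q ≠ 0 := by
    intro h; rw [h] at hq0; simp at hq0
  set Q : ℂ := q ^ 2 with hQdef
  have hQabs : ‖Q‖ < 1 := by
    rw [hQdef, norm_pow]
    exact pow_lt_one₀ (norm_nonneg q) hq (by norm_num)
  obtain ⟨δ, hδ0, hδ⟩ := qp_abs_lower Q hQabs
  set M : ℝ := Real.exp (∑' j : ℕ, ‖Q‖ * ‖Q‖ ^ j) with hM
  have hMb : ∀ m, ‖qp Q Q m‖ ≤ M := qp_abs_upper Q Q hQabs
  have hqpne : ∀ m, qp Q Q m ≠ 0 := by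
    intro m h
    have := hδ m
    rw [h] at this
    simp only [norm_zero] at this
    linarith
  have hP := tendsto_qp Q Q hQabs
  have habs_lim : Tendsto (fun N => ‖qp Q Q N‖) atTop
      (𝓝 (‖qpInf Q Q‖)) := (continuous_norm.tendsto _).comp hP
  have hPinf_abs : δ ≤ ‖qpInf Q Q‖ := ge_of_tendsto' habs_lim hδ
  have hPinf_ne : qpInf Q Q ≠ 0 := by
    intro h
    rw [h] at hPinf_abs
    simp only [norm_zero] at hPinf_abs
    linarith
  have hPinf_M : ‖qpInf Q Q‖ ≤ M :=
    le_of_tendsto' habs_lim hMb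
  -- the truncated coefficient function
  set F : ℕ → ℤ → ℂ := fun N n =>
    if n ∈ Finset.Icc (-(N:ℤ)) (N:ℤ) then
      qpInf Q Q * (gb Q (2*N) ((n + N).toNat) * (q ^ (n^2) * z ^ n))
    else 0 with hF
  have hu : ∀ N, (∑' n : ℤ, F N n) = qpInf Q Q * (qp (-(z*q)) Q N * qp (-(q/z)) Q N) := by
    intro N
    rw [tsum_eq_sum (s := Finset.Icc (-(N:ℤ)) (N:ℤ)) (fun n hn => if_neg hn)]
    rw [finJac q z hq0' hz N, Finset.mul_sum]
    exact Finset.sum_congr rfl fun n hn => if_pos hn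
  have hlim1 : Tendsto (fun N => ∑' n : ℤ, F N n) atTop
      (𝓝 (qpInf Q Q * (qpInf (-(z*q)) Q * qpInf (-(q/z)) Q))) := by
    refine Tendsto.congr (fun N => (hu N).symm) ?_
    exact tendsto_const_nhds.mul ((tendsto_qp _ _ hQabs).mul (tendsto_qp _ _ hQabs))
  -- bound
  have hgb : ∀ N : ℕ, ∀ k : ℕ, k ≤ 2*N → ‖gb Q (2*N) k‖ ≤ M / (δ * δ) := by
    intro N k hk
    have h1 := congrArg (fun w : ℂ => ‖w‖) (gb_mul_qp Q (2*N) k hk)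
    rw [norm_mul, norm_mul] at h1
    have h2 : δ * δ ≤ ‖qp Q Q k‖ * ‖qp Q Q (2*N - k)‖ :=
      mul_le_mul (hδ k) (hδ (2*N - k)) (le_of_lt hδ0) (norm_nonneg _)
    rw [le_div_iff₀ (by positivity)]
    calc ‖gb Q (2*N) k‖ * (δ * δ)
        ≤ ‖gb Q (2*N) k‖ * (‖qp Q Q k‖ * ‖qp Q Q (2*N - k)‖) :=
          mul_le_mul_of_nonneg_left h2 (norm_nonneg _)
      _ = ‖qp Q Q (2*N)‖ := h1
      _ ≤ M := hMb _
  have hbound : ∀ N : ℕ, ∀ n : ℤ,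
      ‖F N n‖ ≤ M * (M / (δ * δ)) * ‖q ^ (n^2) * z ^ n‖ := by
    intro N n
    simp only [hF]
    by_cases hn : n ∈ Finset.Icc (-(N:ℤ)) (N:ℤ)
    · rw [if_pos hn]
      simp only [Finset.mem_Icc] at hn
      have hk : (n + N).toNat ≤ 2*N := by omega
      rw [norm_mul, norm_mul]
      have hMnn : (0:ℝ) ≤ M := by
        have := hMb 0
        have h0 : (0:ℝ) ≤ ‖qp Q Q 0‖ := norm_nonneg _
        linarith
      have hmm := mul_le_mul hPinf_M (hgb N _ hk) (norm_nonneg _) hMnn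
      calc ‖qpInf Q Q‖ * (‖gb Q (2*N) ((n + N).toNat)‖
              * ‖q ^ (n^2) * z ^ n‖)
          = (‖qpInf Q Q‖ * ‖gb Q (2*N) ((n + N).toNat)‖)
              * ‖q ^ (n^2) * z ^ n‖ := by ring
        _ ≤ M * (M / (δ * δ)) * ‖q ^ (n^2) * z ^ n‖ :=
            mul_le_mul_of_nonneg_right hmm (norm_nonneg _)
    · rw [if_neg hn, norm_zero]
      positivity
  -- pointwise limits
  have h2N : Tendsto (fun N : ℕ => 2*N) atTop atTop :=
    Filter.tendsto_atTop_atTop.mpr fun b => ⟨b, fun a ha => by omega⟩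
  have hpt : ∀ n : ℤ, Tendsto (fun N => F N n) atTop (𝓝 (q ^ (n^2) * z ^ n)) := by
    intro n
    have hkt : Tendsto (fun N : ℕ => (n + N).toNat) atTop atTop :=
      Filter.tendsto_atTop_atTop.mpr fun b => ⟨b + n.natAbs, fun a ha => by omega⟩
    have hmkt : Tendsto (fun N : ℕ => 2*N - (n + N).toNat) atTop atTop :=
      Filter.tendsto_atTop_atTop.mpr fun b => ⟨b + n.natAbs, fun a ha => by omega⟩
    have t1 : Tendsto (fun N : ℕ => qp Q Q (2*N)) atTop (𝓝 (qpInf Q Q)) := hP.comp h2N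
    have t2 : Tendsto (fun N : ℕ => qp Q Q ((n + N).toNat)) atTop (𝓝 (qpInf Q Q)) := hP.comp hkt
    have t3 : Tendsto (fun N : ℕ => qp Q Q (2*N - (n + N).toNat)) atTop (𝓝 (qpInf Q Q)) :=
      hP.comp hmkt
    have hne2 : qpInf Q Q * qpInf Q Q ≠ 0 := mul_ne_zero hPinf_ne hPinf_ne
    have tG : Tendsto (fun N : ℕ =>
        qpInf Q Q * (qp Q Q (2*N) * (qp Q Q ((n + N).toNat) * qp Q Q (2*N - (n + N).toNat))⁻¹))
        atTop (𝓝 (qpInf Q Q * (qpInf Q Q * (qpInf Q Q * qpInf Q Q)⁻¹))) :=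
      tendsto_const_nhds.mul (t1.mul ((t2.mul t3).inv₀ hne2))
    have hone : qpInf Q Q * (qpInf Q Q * (qpInf Q Q * qpInf Q Q)⁻¹) = 1 := by
      field_simp
    rw [hone] at tG
    have tGw := tG.mul_const (q ^ (n^2) * z ^ n)
    rw [one_mul] at tGw
    refine tGw.congr' ?_
    filter_upwards [Filter.eventually_ge_atTop n.natAbs] with N hN
    have hmem : n ∈ Finset.Icc (-(N:ℤ)) (N:ℤ) := by
      simp only [Finset.mem_Icc]; omega
    have hk2N : (n + N).toNat ≤ 2*N := by omega
    have hgbeq : gb Q (2*N) ((n + N).toNat)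
        = qp Q Q (2*N) * (qp Q Q ((n + N).toNat) * qp Q Q (2*N - (n + N).toNat))⁻¹ := by
      have h := gb_mul_qp Q (2*N) ((n + N).toNat) hk2N
      field_simp [hqpne] at h ⊢
      linear_combination h
    simp only [hF, if_pos hmem]
    rw [hgbeq]
    ring
  -- dominated convergence
  have hsum_bound : Summable (fun n : ℤ => M * (M / (δ * δ)) * ‖q ^ (n^2) * z ^ n‖) :=
    (summable_theta_abs q z hq0' hq hz).mul_left _
  have hDC : Tendsto (fun N => ∑' n : ℤ, F N n) atTop (𝓝 (∑' n : ℤ, q ^ (n^2) * z ^ n)) := by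
    refine tendsto_tsum_of_dominated_convergence hsum_bound hpt ?_
    filter_upwards with N
    intro n
    simpa using hbound N n
  have heq : (∑' n : ℤ, q ^ (n^2) * z ^ n)
      = qpInf Q Q * (qpInf (-(z*q)) Q * qpInf (-(q/z)) Q) := tendsto_nhds_unique hDC hlim1
  have hsummable : Summable (fun n : ℤ => q ^ (n^2) * z ^ n) := by
    apply Summable.of_norm
    simpa using summable_theta_abs q z hq0' hq hz
  have := hsummable.hasSum
  rw [heq] at this
  rw [hQdef] at this
  convert this using 1
  ring
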